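/- E_M is an upper bound-comparison with E_W: for any bipartite state ρ, E_M(ρ) ≤ E_W(ρ), where E_M(ρ) = -log min { ‖R^{T_B}‖_∞ : R ≥ P } with P the support projection of ρ, and E_W(ρ) = log max { tr(ρ R) : R ≥ 0, -I ≤ R^{T_B} ≤ I }. -/

import Mathlib

set_option linter.unusedSectionVars false

open scoped Matrix ComplexOrder

/-- Partial transpose on the second tensor factor. -/
def pt {α β : Type*} (M : Matrix (α × β) (α × β) ℂ) : Matrix (α × β) (α × β) ℂ :=
  fun p q => M (p.1, q.2) (q.1, p.2)

open scoped Classical in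
/-- Trace norm of a Hermitian matrix: sum of absolute values of eigenvalues
(and `0` on non-Hermitian matrices). -/
noncomputable def traceNorm {n : Type*} [Fintype n] [DecidableEq n]
    (M : Matrix n n ℂ) : ℝ :=
  if h : M.IsHermitian then ∑ i, |h.eigenvalues i| else 0

open scoped Classical in
/-- Operator norm of a Hermitian matrix: maximum absolute value of eigenvalues
(and `0` on non-Hermitian matrices). -/
noncomputable def opNorm {n : Type*} [Fintype n] [DecidableEq n]
    (M : Matrix n n ℂ) : ℝ :=
  if h : M.IsHermitian then ⨆ i, |h.eigenvalues i| else 0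

section Helpers

variable {n : Type*} [Fintype n] [DecidableEq n]

lemma psd_smul' {c : ℝ} (hc : 0 ≤ c) {M : Matrix n n ℂ} (hM : M.PosSemidef) :
    ((c : ℂ) • M).PosSemidef := by
  refine Matrix.posSemidef_iff_dotProduct_mulVec.mpr ⟨?_, ?_⟩
  · unfold Matrix.IsHermitian
    rw [Matrix.conjTranspose_smul, hM.1.eq]
    norm_num
  · intro x
    rw [Matrix.smul_mulVec, dotProduct_smul]
    exact smul_nonneg (by simp [Complex.le_def, hc]) (hM.dotProduct_mulVec_nonneg x)

lemma psd_trace_nonneg' {M : Matrix n n ℂ} (hM : M.PosSemidef) : 0 ≤ M.trace := by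
  refine Finset.sum_nonneg fun i _ => ?_
  have h := hM.dotProduct_mulVec_nonneg (Pi.single i 1)
  simpa [Matrix.mulVec_single, ← Pi.single_star, single_dotProduct,
    Pi.single_apply] using h

lemma psd_trace_mul_nonneg' {A B : Matrix n n ℂ} (hA : A.PosSemidef) (hB : B.PosSemidef) :
    0 ≤ (A * B).trace := by
  open scoped MatrixOrder in obtain ⟨C, rfl⟩ := CStarAlgebra.nonneg_iff_eq_star_mul_self.mp hB.nonneg
  calc (0:ℂ) ≤ (C * A * Cᴴ).trace := psd_trace_nonneg' (hA.mul_mul_conjTranspose_same C)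
  _ = (A * (Cᴴ * C)).trace := by rw [← Matrix.trace_mul_cycle, mul_assoc]

lemma nonneg_re_eq_abs' {z : ℂ} (hz : 0 ≤ z) : ‖z‖ = z.re := by
  obtain ⟨h1, h2⟩ := Complex.nonneg_iff.mp hz
  rw [Complex.norm_def, Complex.normSq_apply, ← h2]
  simpa using Real.sqrt_mul_self h1

lemma psd_quad_expand' (M : Matrix n n ℂ) (p q : n) (θ : ℂ) :
    dotProduct (star (Pi.single p 1 + Pi.single q θ))
      (M *ᵥ (Pi.single p 1 + Pi.single q θ)) =
      M p p + star θ * M q p + M p q * θ + star θ * M q q * θ := by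
  have e1 : star ((Pi.single p (1:ℂ) : n → ℂ) + (Pi.single q θ : n → ℂ)) =
      (Pi.single p (1:ℂ) : n → ℂ) + (Pi.single q (star θ) : n → ℂ) := by
    rw [star_add, ← Pi.single_star, ← Pi.single_star, star_one]
  rw [e1, Matrix.mulVec_add, add_dotProduct, dotProduct_add,
    dotProduct_add, Matrix.mulVec_single, Matrix.mulVec_single]
  simp only [single_dotProduct, Pi.smul_apply, Matrix.col_apply, op_smul_eq_mul]
  ring

lemma psd_diag_nonneg'' {M : Matrix n n ℂ} (hM : M.PosSemidef) (i : n) :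
    0 ≤ M i i := by
  have h := hM.dotProduct_mulVec_nonneg (Pi.single i 1)
  simpa [Matrix.mulVec_single, ← Pi.single_star, single_dotProduct,
    Pi.single_apply] using h

lemma psd_trace_re_nonneg' {M : Matrix n n ℂ} (hM : M.PosSemidef) : 0 ≤ M.trace.re := by
  rw [Matrix.trace, Complex.re_sum]
  exact Finset.sum_nonneg fun i _ => (Complex.nonneg_iff.mp (psd_diag_nonneg'' hM i)).1

lemma psd_abs_entry_le_trace' {M : Matrix n n ℂ} (hM : M.PosSemidef) (p q : n) :
    ‖M p q‖ ≤ M.trace.re := by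
  have hdiag : ∀ i, 0 ≤ (M i i).re := fun i =>
    (Complex.nonneg_iff.mp (psd_diag_nonneg'' hM i)).1
  have htr : M.trace.re = ∑ i, (M i i).re := by rw [Matrix.trace, Complex.re_sum]; rfl
  by_cases hpq : p = q
  · subst hpq
    rw [nonneg_re_eq_abs' (psd_diag_nonneg'' hM p), htr]
    exact Finset.single_le_sum (fun i _ => hdiag i) (Finset.mem_univ p)
  · by_cases h0 : M q p = 0
    · have : M p q = 0 := by rw [← hM.1.apply p q, h0, star_zero]
      rw [this, norm_zero, htr]
      exact Finset.sum_nonneg fun i _ => hdiag i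
    · set z := M q p with hz
      set r : ℝ := ‖z‖ with hr
      have hrpos : 0 < r := by simpa [hr] using (norm_pos_iff.mpr h0)
      set θ : ℂ := -(z / (r : ℂ)) with hθ
      have hrne : (r : ℂ) ≠ 0 := by exact_mod_cast hrpos.ne'
      have hzz : starRingEnd ℂ z * z = ((r : ℂ))^2 := by
        rw [mul_comm, Complex.mul_conj]
        norm_cast
        rw [hr, ← Complex.sq_norm]
      have h1 : star θ * z = -(r : ℂ) := by
        simp only [hθ, star_neg, star_div₀, Complex.star_def, Complex.conj_ofReal]
        field_simp [hzz]
        linear_combination -hzz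
      have h2 : M p q * θ = -(r : ℂ) := by
        have hpqz : M p q = starRingEnd ℂ z := by rw [← hM.1.apply p q]; rfl
        rw [hpqz, hθ]
        field_simp [hzz]
        linear_combination -hzz
      have h3 : star θ * M q q * θ = M q q := by
        have : star θ * θ = 1 := by
          simp only [hθ, star_neg, star_div₀, Complex.star_def, Complex.conj_ofReal]
          field_simp [hzz]
          linear_combination hzz
        calc star θ * M q q * θ = M q q * (star θ * θ) := by ring
        _ = M q q := by rw [this, mul_one]
      have hquad := hM.dotProduct_mulVec_nonneg (Pi.single p 1 + Pi.single q θ)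
      rw [psd_quad_expand' M p q θ, h1, h2, h3] at hquad
      have hre := (Complex.nonneg_iff.mp hquad).1
      simp only [Complex.add_re, Complex.neg_re, Complex.ofReal_re] at hre
      have habs : ‖M p q‖ = r := by
        rw [← hM.1.apply p q, hr]; simp [hz]
      have hsub : (M p p).re + (M q q).re ≤ M.trace.re := by
        rw [htr]
        have := Finset.sum_le_sum_of_subset_of_nonneg
          (Finset.subset_univ ({p, q} : Finset n)) (fun i _ _ => hdiag i)
        rwa [Finset.sum_pair hpq] at this
      rw [habs]
      linarith

lemma herm_shift_psd' {A : Matrix n n ℂ} (hA : A.IsHermitian) {c : ℝ}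
    (hc : ∀ i, |hA.eigenvalues i| ≤ c) :
    ((c : ℂ) • 1 - A).PosSemidef ∧ ((c : ℂ) • 1 + A).PosSemidef := by
  set U : Matrix n n ℂ := (Matrix.IsHermitian.eigenvectorUnitary hA : Matrix n n ℂ) with hU
  have hUU : U * star U = 1 :=
    (Matrix.mem_unitaryGroup_iff).mp (Matrix.IsHermitian.eigenvectorUnitary hA).2
  have hkey : ∀ s : ℝ, ((s : ℂ) • 1 : Matrix n n ℂ) =
      U * ((s : ℂ) • 1) * star U := by
    intro s
    rw [Matrix.mul_smul, Matrix.mul_one, Matrix.smul_mul, hUU]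
  have hdiag1 : ((c : ℂ) • (1 : Matrix n n ℂ)) =
      Matrix.diagonal (fun _ => (c : ℂ)) := by
    ext i j
    by_cases h : i = j <;> simp [h, Matrix.one_apply, Matrix.diagonal_apply]
  constructor
  · have : ((c : ℂ) • 1 - A) = U * Matrix.diagonal
        (fun i => (c : ℂ) - (hA.eigenvalues i : ℂ)) * star U := by
      conv_lhs => rw [hkey c, hA.spectral_theorem, Unitary.conjStarAlgAut_apply]
      rw [← Matrix.sub_mul, ← Matrix.mul_sub, hdiag1, Matrix.diagonal_sub]
      rfl
    rw [this, Matrix.star_eq_conjTranspose]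
    refine Matrix.PosSemidef.mul_mul_conjTranspose_same ?_ U
    refine Matrix.PosSemidef.diagonal fun i => ?_
    show (0:ℂ) ≤ _
    rw [Complex.nonneg_iff]
    constructor
    · simp only [Complex.sub_re, Complex.ofReal_re]
      have := abs_le.mp (hc i)
      linarith [this.2]
    · simp
  · have : ((c : ℂ) • 1 + A) = U * Matrix.diagonal
        (fun i => (c : ℂ) + (hA.eigenvalues i : ℂ)) * star U := by
      conv_lhs => rw [hkey c, hA.spectral_theorem, Unitary.conjStarAlgAut_apply]
      rw [← Matrix.add_mul, ← Matrix.mul_add, hdiag1, Matrix.diagonal_add]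
      rfl
    rw [this, Matrix.star_eq_conjTranspose]
    refine Matrix.PosSemidef.mul_mul_conjTranspose_same ?_ U
    refine Matrix.PosSemidef.diagonal fun i => ?_
    show (0:ℂ) ≤ _
    rw [Complex.nonneg_iff]
    constructor
    · simp only [Complex.add_re, Complex.ofReal_re]
      have := abs_le.mp (hc i)
      linarith [this.1]
    · simp

lemma herm_idem_psd {M : Matrix n n ℂ} (hM : M.IsHermitian) (hMM : M * M = M) :
    M.PosSemidef := by
  have h2 : M = Mᴴ * M := by
    rw [hM.eq]
    exact hMM.symm
  rw [h2]
  exact Matrix.posSemidef_conjTranspose_mul_self M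

end Helpers

section PtLemmas

variable {α β : Type*} [Fintype α] [Fintype β] [DecidableEq α] [DecidableEq β]

lemma pt_pt (M : Matrix (α × β) (α × β) ℂ) : pt (pt M) = M := rfl

lemma pt_smul (c : ℂ) (M : Matrix (α × β) (α × β) ℂ) : pt (c • M) = c • pt M := rfl

lemma pt_diag (M : Matrix (α × β) (α × β) ℂ) (p : α × β) : pt M p p = M p p := rfl

lemma pt_one : pt (1 : Matrix (α × β) (α × β) ℂ) = 1 := by
  funext p q
  by_cases h1 : p.1 = q.1 <;> by_cases h2 : p.2 = q.2 <;>
    simp [pt, Matrix.one_apply, Prod.ext_iff, h1, h2, eq_comm]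

lemma pt_isHermitian {M : Matrix (α × β) (α × β) ℂ} (hM : M.IsHermitian) :
    (pt M).IsHermitian := by
  unfold Matrix.IsHermitian
  funext p q
  rw [Matrix.conjTranspose_apply]
  exact hM.apply (p.1, q.2) (q.1, p.2)

end PtLemmas

/-- `E_M(ρ) ≤ E_W(ρ)`, where
`E_M(ρ) = -log min { ‖R^{T_B}‖_∞ : R Hermitian, R ≥ P }` (`P` the support
projection of `ρ`) and `E_W(ρ) = log max { tr(ρ R) : R ≥ 0, -I ≤ R^{T_B} ≤ I }`. -/
theorem statement5 {a b : ℕ}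
    (ρ P : Matrix (Fin a × Fin b) (Fin a × Fin b) ℂ)
    (hρ : ρ.PosSemidef) (hρtr : ρ.trace = 1)
    (hP : P.IsHermitian) (hPproj : P * P = P)
    (hsupp : LinearMap.range P.mulVecLin = LinearMap.range ρ.mulVecLin) :
    -Real.log (sInf {x : ℝ | ∃ R : Matrix (Fin a × Fin b) (Fin a × Fin b) ℂ,
        R.IsHermitian ∧ (R - P).PosSemidef ∧ x = opNorm (pt R)}) ≤
    Real.log (sSup {x : ℝ | ∃ R : Matrix (Fin a × Fin b) (Fin a × Fin b) ℂ,
        R.PosSemidef ∧ (1 - pt R).PosSemidef ∧ (1 + pt R).PosSemidef ∧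
        x = ((ρ * R).trace).re}) := by
  set S1 := {x : ℝ | ∃ R : Matrix (Fin a × Fin b) (Fin a × Fin b) ℂ,
      R.IsHermitian ∧ (R - P).PosSemidef ∧ x = opNorm (pt R)} with hS1
  set S2 := {x : ℝ | ∃ R : Matrix (Fin a × Fin b) (Fin a × Fin b) ℂ,
      R.PosSemidef ∧ (1 - pt R).PosSemidef ∧ (1 + pt R).PosSemidef ∧
      x = ((ρ * R).trace).re} with hS2
  -- the index type is nonempty
  have hne : Nonempty (Fin a × Fin b) := by
    by_contra h
    rw [not_nonempty_iff] at h
    rw [Matrix.trace, Finset.univ_eq_empty, Finset.sum_empty] at hρtr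
    exact absurd hρtr (by norm_num)
  -- P*ρ = ρ
  have hcol : ∀ v, P *ᵥ (ρ *ᵥ v) = ρ *ᵥ v := by
    intro v
    have hmem : ρ *ᵥ v ∈ LinearMap.range ρ.mulVecLin := ⟨v, rfl⟩
    rw [← hsupp] at hmem
    obtain ⟨u, hu⟩ := hmem
    simp only [Matrix.mulVecLin_apply] at hu
    rw [← hu, Matrix.mulVec_mulVec, hPproj]
  have hPρ : P * ρ = ρ := by
    ext i j
    have h := congrFun (hcol (Pi.single j 1)) i
    simpa [Matrix.mul_apply, Matrix.mulVec, dotProduct, Pi.single_apply,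
      mul_ite, mul_one, mul_zero, Finset.sum_ite_eq'] using h
  have htrρP : (ρ * P).trace = 1 := by
    rw [Matrix.trace_mul_comm, hPρ, hρtr]
  -- P is PSD
  have hPpsd : P.PosSemidef := herm_idem_psd hP hPproj
  -- 1 ∈ S2
  have hone : (1 : ℝ) ∈ S2 := by
    refine ⟨1, Matrix.PosSemidef.one, ?_, ?_, ?_⟩
    · rw [pt_one, sub_self]
      exact Matrix.PosSemidef.zero
    · rw [pt_one]
      exact Matrix.PosSemidef.add Matrix.PosSemidef.one Matrix.PosSemidef.one
    · rw [mul_one, hρtr, Complex.one_re]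
  -- S2 is bounded above
  have hbdd : BddAbove S2 := by
    refine ⟨(∑ p : Fin a × Fin b, ∑ q : Fin a × Fin b, ‖ρ p q‖) * (Fintype.card (Fin a × Fin b)), ?_⟩
    rintro x ⟨R, hRpsd, h1m, h1p, rfl⟩
    have hRdiag : ∀ p : Fin a × Fin b, (R p p).re ≤ 1 := by
      intro p
      have h := psd_diag_nonneg'' h1m p
      have := (Complex.nonneg_iff.mp h).1
      simp only [Matrix.sub_apply, Matrix.one_apply_eq, Complex.sub_re,
        Complex.one_re] at this
      rw [pt_diag] at this
      linarith
    have htrR : (R.trace).re ≤ (Fintype.card (Fin a × Fin b) : ℝ) := by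
      rw [Matrix.trace, Complex.re_sum]
      calc (∑ i : Fin a × Fin b, (R.diag i).re) ≤ ∑ _i : Fin a × Fin b, (1:ℝ) :=
            Finset.sum_le_sum fun i _ => hRdiag i
        _ = (Fintype.card (Fin a × Fin b) : ℝ) := by simp
    have hentry : ∀ p q : Fin a × Fin b, ‖R q p‖ ≤ (Fintype.card (Fin a × Fin b) : ℝ) :=
      fun p q => le_trans (psd_abs_entry_le_trace' hRpsd q p) htrR
    calc ((ρ * R).trace).re ≤ ‖(ρ * R).trace‖ := Complex.re_le_norm _
      _ ≤ ∑ p : Fin a × Fin b, ‖(ρ * R) p p‖ := by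
          rw [Matrix.trace]
          exact norm_sum_le _ _
      _ ≤ ∑ p : Fin a × Fin b, ∑ q : Fin a × Fin b, ‖ρ p q‖ * ‖R q p‖ := by
          refine Finset.sum_le_sum fun p _ => ?_
          rw [Matrix.mul_apply]
          calc ‖∑ q : Fin a × Fin b, ρ p q * R q p‖
              ≤ ∑ q : Fin a × Fin b, ‖ρ p q * R q p‖ := norm_sum_le _ _
            _ = ∑ q : Fin a × Fin b, ‖ρ p q‖ * ‖R q p‖ := by
                simp [map_mul]
      _ ≤ ∑ p : Fin a × Fin b, ∑ q : Fin a × Fin b, ‖ρ p q‖ * (Fintype.card (Fin a × Fin b) : ℝ) := by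
          refine Finset.sum_le_sum fun p _ => Finset.sum_le_sum fun q _ => ?_
          exact mul_le_mul_of_nonneg_left (hentry p q) (norm_nonneg _)
      _ = (∑ p : Fin a × Fin b, ∑ q : Fin a × Fin b, ‖ρ p q‖) * (Fintype.card (Fin a × Fin b) : ℝ) := by
          rw [Finset.sum_mul]
          exact Finset.sum_congr rfl fun p _ => by rw [Finset.sum_mul]
  -- s := sSup S2 ≥ 1
  set s := sSup S2 with hs
  have hs1 : (1:ℝ) ≤ s := le_csSup hbdd hone
  have hspos : 0 < s := lt_of_lt_of_le one_pos hs1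
  -- S1 is nonempty
  have hS1ne : S1.Nonempty := by
    refine ⟨opNorm (pt (1 : Matrix (Fin a × Fin b) (Fin a × Fin b) ℂ)), 1, Matrix.isHermitian_one, ?_, rfl⟩
    refine herm_idem_psd ((Matrix.isHermitian_one).sub hP) ?_
    simp only [sub_mul, mul_sub, one_mul, mul_one, hPproj]
    abel
  -- every element of S1 is at least s⁻¹
  have hkey : ∀ x ∈ S1, s⁻¹ ≤ x := by
    rintro x ⟨R, hRH, hRP, rfl⟩
    have hptH : (pt R).IsHermitian := pt_isHermitian hRH
    have hxval : opNorm (pt R) = ⨆ i, |hptH.eigenvalues i| := by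
      rw [opNorm, dif_pos hptH]
    set c := opNorm (pt R) with hc
    have hcbound : ∀ i, |hptH.eigenvalues i| ≤ c := by
      intro i
      rw [hxval]
      exact le_ciSup (f := fun i => |hptH.eigenvalues i|) (Set.Finite.bddAbove (Set.finite_range _)) i
    have hcnn : 0 ≤ c := by
      obtain ⟨i⟩ := hne
      exact le_trans (abs_nonneg _) (hcbound i)
    obtain ⟨hshift1, hshift2⟩ := herm_shift_psd' hptH hcbound
    -- R is PSD
    have hRpsd : R.PosSemidef := by
      have : R = P + (R - P) := by abel
      rw [this]
      exact Matrix.PosSemidef.add hPpsd hRP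
    -- tr(ρR).re ≥ 1
    have hsplit : ρ * R = ρ * P + ρ * (R - P) := by
      rw [mul_sub]
      abel
    have htrineq : (1:ℝ) ≤ ((ρ * R).trace).re := by
      rw [hsplit, Matrix.trace_add, htrρP]
      have h0 := psd_trace_mul_nonneg' hρ hRP
      have := (Complex.nonneg_iff.mp h0).1
      simp only [Complex.add_re, Complex.one_re]
      linarith
    -- c > 0
    have hcpos : 0 < c := by
      rcases lt_or_eq_of_le hcnn with h | h
      · exact h
      · exfalso
        have hc0 : c = 0 := h.symm
        rw [hc0] at hshift1 hshift2
        simp only [Complex.ofReal_zero, zero_smul, zero_sub, zero_add] at hshift1 hshift2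
        have hptzero : pt R = 0 := by
          funext p q
          have h1 := psd_abs_entry_le_trace' hshift2 p q
          have h2 := psd_trace_re_nonneg' hshift1
          have h3 : ((-(pt R)).trace).re = -((pt R).trace).re := by
            rw [Matrix.trace_neg, Complex.neg_re]
          rw [h3] at h2
          have : ‖pt R p q‖ ≤ 0 := by linarith
          have := le_antisymm this (norm_nonneg _)
          simpa using this
        have hR0 : R = 0 := by
          rw [← pt_pt R, hptzero]
          rfl
        rw [hR0, mul_zero, Matrix.trace_zero] at htrineq
        norm_num at htrineq
    -- build the witness for S2
    set R' := ((c⁻¹ : ℝ) : ℂ) • R with hR'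
    have hinvnn : (0:ℝ) ≤ c⁻¹ := inv_nonneg.mpr hcnn
    have hcancel : ((c⁻¹ : ℝ) : ℂ) * ((c : ℝ) : ℂ) = 1 := by
      rw [← Complex.ofReal_mul, inv_mul_cancel₀ hcpos.ne']
      norm_num
    have hR'psd : R'.PosSemidef := psd_smul' hinvnn hRpsd
    have h1m : (1 - pt R').PosSemidef := by
      have : (1 : Matrix (Fin a × Fin b) (Fin a × Fin b) ℂ) - pt R' =
          ((c⁻¹ : ℝ) : ℂ) • (((c : ℝ) : ℂ) • 1 - pt R) := by
        rw [hR', pt_smul, smul_sub, smul_smul, hcancel, one_smul]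
      rw [this]
      exact psd_smul' hinvnn hshift1
    have h1p : (1 + pt R').PosSemidef := by
      have : (1 : Matrix (Fin a × Fin b) (Fin a × Fin b) ℂ) + pt R' =
          ((c⁻¹ : ℝ) : ℂ) • (((c : ℝ) : ℂ) • 1 + pt R) := by
        rw [hR', pt_smul, smul_add, smul_smul, hcancel, one_smul]
      rw [this]
      exact psd_smul' hinvnn hshift2
    have hval : ((ρ * R').trace).re = c⁻¹ * ((ρ * R).trace).re := by
      rw [hR', mul_smul_comm, Matrix.trace_smul, smul_eq_mul, Complex.re_ofReal_mul]
    have hmem2 : ((ρ * R').trace).re ∈ S2 := ⟨R', hR'psd, h1m, h1p, rfl⟩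
    have hle : c⁻¹ ≤ ((ρ * R').trace).re := by
      rw [hval]
      calc c⁻¹ = c⁻¹ * 1 := (mul_one _).symm
        _ ≤ c⁻¹ * ((ρ * R).trace).re :=
            mul_le_mul_of_nonneg_left htrineq hinvnn
    have hcs : c⁻¹ ≤ s := le_trans hle (le_csSup hbdd hmem2)
    -- conclude s⁻¹ ≤ c
    calc s⁻¹ ≤ (c⁻¹)⁻¹ := inv_anti₀ (inv_pos.mpr hcpos) hcs
      _ = c := inv_inv c
  -- finish
  have hm : s⁻¹ ≤ sInf S1 := le_csInf hS1ne hkey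
  have hspinv : (0:ℝ) < s⁻¹ := inv_pos.mpr hspos
  have hmpos : 0 < sInf S1 := lt_of_lt_of_le hspinv hm
  have hminv : (sInf S1)⁻¹ ≤ s := by
    calc (sInf S1)⁻¹ ≤ (s⁻¹)⁻¹ := inv_anti₀ hspinv hm
      _ = s := inv_inv s
  rw [← Real.log_inv]
  exact (Real.log_le_log_iff (inv_pos.mpr hmpos) hspos).mpr hminv
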